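/- Let n ∈ ℕ₊, let H̃ ∈ ℝ^{n×n}, λ ∈ ℝ, τ > 0, and let γ, θ, φ, ψ ∈ ℝ^n with all components of φ and ψ positive. Suppose Δz ∈ ℝ^n satisfies the compact system (2λH̃ + diag(γ/φ) + diag(θ/ψ))·Δz = τ·(1/ψ) − τ·(1/φ) + γ − θ, and define Δγ = (γ/φ) ⊙ Δz + τ·(1/φ) − γ, Δθ = −(θ/ψ) ⊙ Δz + τ·(1/ψ) − θ, Δφ = −Δz, Δψ = Δz. Then with Ω = [I, −I] ∈ ℝ^{n×2n}, Δx = col(Δγ, Δθ), Δs = col(Δφ, Δψ), x = col(γ, θ), and s = col(φ, ψ), the full Newton system holds: 2λH̃Δz + ΩΔx = 0, ΩᵀΔz + Δs = 0, and s ⊙ Δx + x ⊙ Δs = τe − x ⊙ s. -/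

import Mathlib

open Matrix

/-- the solution of the compact linear system, together with the
back-substitutions for `Δγ, Δθ, Δφ, Δψ`, solves the full exact Newton system. -/
theorem compact_implies_full_newton (n : ℕ) (hn : 0 < n)
    (Ht : Matrix (Fin n) (Fin n) ℝ) (lam : ℝ) (τ : ℝ) (hτ : 0 < τ)
    (γ θ φ ψ : Fin n → ℝ)
    (hφ : ∀ i, 0 < φ i) (hψ : ∀ i, 0 < ψ i)
    (Δz : Fin n → ℝ)
    (hcompact : ((2 * lam) • Ht + Matrix.diagonal (fun i => γ i / φ i)
        + Matrix.diagonal (fun i => θ i / ψ i)).mulVec Δz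
      = fun i => τ * (ψ i)⁻¹ - τ * (φ i)⁻¹ + γ i - θ i)
    (Δγ Δθ Δφ Δψ : Fin n → ℝ)
    (hΔγ : Δγ = fun i => (γ i / φ i) * Δz i + τ * (φ i)⁻¹ - γ i)
    (hΔθ : Δθ = fun i => -(θ i / ψ i) * Δz i + τ * (ψ i)⁻¹ - θ i)
    (hΔφ : Δφ = -Δz) (hΔψ : Δψ = Δz)
    (Ω : Matrix (Fin n) (Fin n ⊕ Fin n) ℝ)
    (hΩ : Ω = Matrix.fromCols (1 : Matrix (Fin n) (Fin n) ℝ) (-1))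
    (Δx Δs x s : Fin n ⊕ Fin n → ℝ)
    (hΔx : Δx = Sum.elim Δγ Δθ) (hΔs : Δs = Sum.elim Δφ Δψ)
    (hxdef : x = Sum.elim γ θ) (hsdef : s = Sum.elim φ ψ) :
    (2 * lam) • Ht.mulVec Δz + Ω.mulVec Δx = 0 ∧
    Ωᵀ.mulVec Δz + Δs = 0 ∧
    (fun i => s i * Δx i + x i * Δs i) = fun i => τ - x i * s i := by
  subst hΔγ hΔθ hΔφ hΔψ hΩ hΔx hΔs hxdef hsdef
  have hc := congrFun hcompact
  simp only [Matrix.add_mulVec, Matrix.smul_mulVec, Matrix.mulVec_diagonal,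
    Pi.add_apply, Pi.smul_apply, smul_eq_mul] at hc
  refine ⟨?_, ?_, ?_⟩
  · rw [Matrix.fromCols_mulVec_sumElim]
    funext i
    have := hc i
    simp only [Pi.add_apply, Pi.smul_apply, Pi.zero_apply, smul_eq_mul,
      Matrix.neg_mulVec, Matrix.one_mulVec, Pi.neg_apply]
    simp only [Matrix.mulVec, dotProduct] at this ⊢
    linarith
  · rw [Matrix.transpose_fromCols, Matrix.fromRows_mulVec]
    funext i
    cases i with
    | inl i => simp [Matrix.one_mulVec]
    | inr i => simp [Matrix.neg_mulVec, Matrix.one_mulVec]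
  · funext i
    cases i with
    | inl i =>
      have h := (hφ i).ne'
      simp only [Sum.elim_inl, Pi.neg_apply]
      field_simp
      ring
    | inr i =>
      have h := (hψ i).ne'
      simp only [Sum.elim_inr]
      field_simp
      ring
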